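/- (CP form of the t-SVDMII approximation.) Let M ∈ Matrix.unitaryGroup (Fin n) ℂ, let A = U ⋆_M S ⋆_M Vᴴ be a t-SVDM of an m×p×n tensor A, let ρ : Fin n → ℕ with ρ i ≤ min(m,p) for all i, and let A_ρ be the multi-rank-ρ truncation. Then for every pair (i,j) with j < ρ i there exist vectors x_{i,j} : Fin m → ℂ, y_{i,j} : Fin p → ℂ and z_{i,j} : Fin n → ℂ, each of Euclidean norm 1, such that for all a, b, c: ((A_ρ) c) a b = ∑_{i : Fin n} ∑_{j < ρ i} σⱼ⁽ⁱ⁾ · (x_{i,j} a) · (y_{i,j} b) · (z_{i,j} c), where σⱼ⁽ⁱ⁾ := (Ŝ i) j j. In particular A_ρ is a sum of ∑ i, ρ i rank-one tensors of unit Frobenius norm weighted by the retained singular values. -/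

import Mathlib

open scoped BigOperators ComplexConjugate Matrix

noncomputable section

variable {R : Type*}

/-- Mode-3 product of a third-order tensor (encoded by its frontal slices)
with a transform matrix: `(A ×₃ M) i = ∑ j, (M i j) • (A j)`. -/
def mode3 [RCLike R] {ι α β : Type*} [Fintype ι]
    (A : ι → Matrix α β R) (M : Matrix ι ι R) : ι → Matrix α β R :=
  fun i => ∑ j, M i j • A j

/-- Frobenius (entrywise ℓ²) norm of a matrix. -/
def fnorm [RCLike R] {α β : Type*} [Fintype α] [Fintype β] (A : Matrix α β R) : ℝ :=
  Real.sqrt (∑ a, ∑ b, ‖A a b‖ ^ 2)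

/-- Frobenius norm of a tensor: `‖A‖² = ∑ i, ‖A i‖²`. -/
def tnorm [RCLike R] {ι α β : Type*} [Fintype ι] [Fintype α] [Fintype β]
    (A : ι → Matrix α β R) : ℝ :=
  Real.sqrt (∑ i, fnorm (A i) ^ 2)

/-- The ⋆_M product: facewise product in the transform domain, then inverse transform. -/
def tprodM [RCLike R] {ι m p q : Type*} [Fintype ι] [DecidableEq ι] [Fintype p]
    (M : Matrix ι ι R) (A : ι → Matrix m p R) (B : ι → Matrix p q R) :
    ι → Matrix m q R :=
  mode3 (fun i => mode3 A M i * mode3 B M i) M⁻¹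

/-- Conjugate transpose of a tensor under ⋆_M. -/
def tconj [RCLike R] {ι m p : Type*} [Fintype ι] [DecidableEq ι]
    (M : Matrix ι ι R) (A : ι → Matrix m p R) : ι → Matrix p m R :=
  mode3 (fun i => (mode3 A M i)ᴴ) M⁻¹

/-- The identity tensor under ⋆_M. -/
def tId [RCLike R] (m : Type*) [DecidableEq m] {ι : Type*} [Fintype ι] [DecidableEq ι]
    (M : Matrix ι ι R) : ι → Matrix m m R :=
  mode3 (fun _ => (1 : Matrix m m R)) M⁻¹

/-- A square tensor `Q` is ⋆_M-unitary if `Qᴴ ⋆_M Q = Q ⋆_M Qᴴ = I`. -/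
def tUnitary [RCLike R] {ι m : Type*} [Fintype ι] [DecidableEq ι] [Fintype m] [DecidableEq m]
    (M : Matrix ι ι R) (Q : ι → Matrix m m R) : Prop :=
  tprodM M (tconj M Q) Q = tId m M ∧ tprodM M Q (tconj M Q) = tId m M

/-- A t-SVDM of `A`: a factorization `A = U ⋆_M S ⋆_M Vᴴ` with `U`, `V` ⋆_M-unitary and every
transform-domain slice `Ŝ i` diagonal with real, nonnegative, nonincreasing diagonal entries. -/
def IsTSVDM [RCLike R] {m p n : ℕ} (M : Matrix (Fin n) (Fin n) R)
    (A : Fin n → Matrix (Fin m) (Fin p) R)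
    (U : Fin n → Matrix (Fin m) (Fin m) R)
    (S : Fin n → Matrix (Fin m) (Fin p) R)
    (V : Fin n → Matrix (Fin p) (Fin p) R) : Prop :=
  A = tprodM M (tprodM M U S) (tconj M V) ∧
  tUnitary M U ∧ tUnitary M V ∧
  (∀ (i : Fin n) (a : Fin m) (b : Fin p), (a : ℕ) ≠ (b : ℕ) → mode3 S M i a b = 0) ∧
  (∀ (i : Fin n) (a : Fin m) (b : Fin p), (a : ℕ) = (b : ℕ) →
      ∃ r : ℝ, 0 ≤ r ∧ mode3 S M i a b = (r : R)) ∧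
  (∀ (i : Fin n) (a a' : Fin m) (b b' : Fin p), (a : ℕ) = (b : ℕ) → (a' : ℕ) = (b' : ℕ) →
      (a : ℕ) ≤ (a' : ℕ) →
      RCLike.re (mode3 S M i a' b') ≤ RCLike.re (mode3 S M i a b))

/-- Transform-domain slice of a truncation:
(first k columns of Û) * (leading k×k block of Ŝ) * (first k columns of V̂)ᴴ. -/
def truncSlice [RCLike R] {m p : ℕ} (k : ℕ) (Uh : Matrix (Fin m) (Fin m) R)
    (Sh : Matrix (Fin m) (Fin p) R) (Vh : Matrix (Fin p) (Fin p) R) :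
    Matrix (Fin m) (Fin p) R :=
  Matrix.of fun a b =>
    ∑ j : Fin m, ∑ l : Fin p,
      if (j : ℕ) < k ∧ (l : ℕ) < k then Uh a j * Sh j l * star (Vh b l) else 0

/-- The multi-rank-ρ truncation of a t-SVDM (use `ρ = fun _ => k` for the t-rank-k truncation). -/
def truncTensor [RCLike R] {m p n : ℕ} (M : Matrix (Fin n) (Fin n) R)
    (U : Fin n → Matrix (Fin m) (Fin m) R) (S : Fin n → Matrix (Fin m) (Fin p) R)
    (V : Fin n → Matrix (Fin p) (Fin p) R) (ρ : Fin n → ℕ) :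
    Fin n → Matrix (Fin m) (Fin p) R :=
  mode3 (fun i => truncSlice (ρ i) (mode3 U M i) (mode3 S M i) (mode3 V M i)) M⁻¹

/-- The permuted tensor `Aᴾ`: `(Aᴾ c) i j = (A i) c j`. -/
def tperm [RCLike R] {m p n : ℕ} (A : Fin n → Matrix (Fin m) (Fin p) R) :
    Fin m → Matrix (Fin n) (Fin p) R :=
  fun c => Matrix.of fun i j => A i c j

lemma mode3_mode3 [RCLike R] {ι α β : Type*} [Fintype ι]
    (X : ι → Matrix α β R) (N M : Matrix ι ι R) :
    mode3 (mode3 X N) M = mode3 X (M * N) := by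
  funext i
  simp only [mode3, Finset.smul_sum, smul_smul, Matrix.mul_apply]
  rw [Finset.sum_comm]
  simp [Finset.sum_smul]

lemma mode3_one [RCLike R] {ι α β : Type*} [Fintype ι] [DecidableEq ι]
    (X : ι → Matrix α β R) : mode3 X (1 : Matrix ι ι R) = X := by
  funext i
  simp [mode3, Matrix.one_apply, ite_smul]

lemma mode3_apply [RCLike R] {ι α β : Type*} [Fintype ι]
    (X : ι → Matrix α β R) (N : Matrix ι ι R) (e : ι) (a : α) (b : β) :
    mode3 X N e a b = ∑ c, N e c * X c a b := by
  simp [mode3, Matrix.sum_apply]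

lemma mode3_mode3_inv [RCLike R] {ι α β : Type*} [Fintype ι] [DecidableEq ι]
    (X : ι → Matrix α β R) (M : Matrix ι ι R) (h : M * M⁻¹ = 1) :
    mode3 (mode3 X M⁻¹) M = X := by
  rw [mode3_mode3, h, mode3_one]

/-- Collapse a double sum supported on the truncated diagonal. -/
lemma diag_sum {m p k : ℕ} (hk : k ≤ min m p) (F : Fin m → Fin p → ℂ)
    (h0 : ∀ (j : Fin m) (l : Fin p), ((j : ℕ) ≠ (l : ℕ) ∨ ¬ (j : ℕ) < k) → F j l = 0) :
    ∑ j, ∑ l, F j l =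
      ∑ q : Fin (min m p), F (Fin.castLE (min_le_left m p) q)
        (Fin.castLE (min_le_right m p) q) := by
  classical
  set g : Fin (min m p) → Fin m × Fin p :=
    fun q => (Fin.castLE (min_le_left m p) q, Fin.castLE (min_le_right m p) q) with hg
  have hginj : Function.Injective g := by
    intro a b hab
    have := congrArg (fun x => (x.1 : ℕ)) hab
    simpa [hg, Fin.ext_iff] using this
  have h1 : ∑ x : Fin m × Fin p, F x.1 x.2 = ∑ j, ∑ l, F j l :=
    Fintype.sum_prod_type (f := fun x => F x.1 x.2)
  rw [← h1]
  have h2 : ∑ q : Fin (min m p), F (g q).1 (g q).2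
      = ∑ x ∈ Finset.univ.image g, F x.1 x.2 := by
    rw [Finset.sum_image (fun a _ b _ h => hginj h)]
  rw [show (∑ q : Fin (min m p), F (Fin.castLE (min_le_left m p) q)
        (Fin.castLE (min_le_right m p) q)) = ∑ q : Fin (min m p), F (g q).1 (g q).2 from rfl,
    h2]
  refine (Finset.sum_subset (Finset.subset_univ _) ?_).symm
  intro x _ hx
  by_contra hne
  have hd : (x.1 : ℕ) = (x.2 : ℕ) := by
    by_contra h; exact hne (h0 _ _ (Or.inl h))
  have hlt : (x.1 : ℕ) < k := by
    by_contra h; exact hne (h0 _ _ (Or.inr h))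
  have hmem : x ∈ Finset.univ.image g := by
    refine Finset.mem_image.2 ⟨⟨(x.1 : ℕ), lt_of_lt_of_le hlt hk⟩, Finset.mem_univ _, ?_⟩
    simp [hg, Prod.ext_iff, Fin.ext_iff, hd.symm]
  exact hx hmem

lemma col_norm_one {d : ℕ} (Q : Matrix (Fin d) (Fin d) ℂ) (h : Qᴴ * Q = 1) (j : Fin d) :
    ∑ a, ‖Q a j‖ ^ 2 = 1 := by
  have h1 : (Qᴴ * Q) j j = 1 := by rw [h]; simp [Matrix.one_apply]
  rw [Matrix.mul_apply] at h1
  have : (((∑ a, ‖Q a j‖ ^ 2 : ℝ)) : ℂ) = 1 := by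
    rw [← h1]
    push_cast
    refine Finset.sum_congr rfl fun a _ => ?_
    rw [Matrix.conjTranspose_apply, ← Complex.ofReal_pow,
      Complex.sq_norm, Complex.normSq_eq_conj_mul_self]
    rfl
  exact_mod_cast this

/-- CP form of the t-SVDMII approximation: the multi-rank-ρ truncation is a sum
of `∑ i, ρ i` rank-one tensors built from unit vectors, weighted by the retained transform-domain
singular values `σⱼ⁽ⁱ⁾ = (Ŝ i) j j`. -/
theorem stmt17 {m p n : ℕ}
    (M : Matrix (Fin n) (Fin n) ℂ) (hM : M ∈ Matrix.unitaryGroup (Fin n) ℂ)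
    (A : Fin n → Matrix (Fin m) (Fin p) ℂ)
    (U : Fin n → Matrix (Fin m) (Fin m) ℂ)
    (S : Fin n → Matrix (Fin m) (Fin p) ℂ)
    (V : Fin n → Matrix (Fin p) (Fin p) ℂ)
    (hsvd : IsTSVDM M A U S V)
    (ρ : Fin n → ℕ) (hρ : ∀ i, ρ i ≤ min m p) :
    ∃ (x : Fin n → Fin (min m p) → Fin m → ℂ)
      (y : Fin n → Fin (min m p) → Fin p → ℂ)
      (z : Fin n → Fin (min m p) → Fin n → ℂ),
      (∀ (i : Fin n) (j : Fin (min m p)), (j : ℕ) < ρ i →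
        (∑ a, ‖x i j a‖ ^ 2 = 1) ∧ (∑ b, ‖y i j b‖ ^ 2 = 1) ∧ (∑ e, ‖z i j e‖ ^ 2 = 1)) ∧
      ∀ (a : Fin m) (b : Fin p) (e : Fin n),
        truncTensor M U S V ρ e a b =
          ∑ i : Fin n, ∑ j : Fin (min m p),
            if (j : ℕ) < ρ i then
              mode3 S M i (Fin.castLE (min_le_left m p) j) (Fin.castLE (min_le_right m p) j) *
                x i j a * y i j b * z i j e
            else 0 := by
  classical
  have hMinv : M⁻¹ = Mᴴ := by
    apply Matrix.inv_eq_left_inv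
    simpa [Matrix.star_eq_conjTranspose] using hM.1
  have hMM : M * M⁻¹ = 1 := by
    rw [hMinv]; simpa [Matrix.star_eq_conjTranspose] using hM.2
  -- transform-domain slices of U and V are unitary
  have key : ∀ {d : ℕ} (Q : Fin n → Matrix (Fin d) (Fin d) ℂ),
      tprodM M (tconj M Q) Q = tId (Fin d) M →
      ∀ i, (mode3 Q M i)ᴴ * mode3 Q M i = 1 := by
    intro d Q h i
    have hc : mode3 (tconj M Q) M = fun i => (mode3 Q M i)ᴴ :=
      mode3_mode3_inv (fun i => (mode3 Q M i)ᴴ) M hMM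
    have h2 := congrArg (fun X => mode3 X M) h
    simp only [tprodM, tId] at h2
    rw [mode3_mode3_inv _ _ hMM, mode3_mode3_inv _ _ hMM] at h2
    have h3 := congrFun h2 i
    rwa [congrFun hc i] at h3
  have hU : ∀ i, (mode3 U M i)ᴴ * (mode3 U M i) = 1 := key U hsvd.2.1.1
  have hV : ∀ i, (mode3 V M i)ᴴ * (mode3 V M i) = 1 := key V hsvd.2.2.1.1
  refine ⟨fun i j a => mode3 U M i a (Fin.castLE (min_le_left m p) j),
    fun i j b => star (mode3 V M i b (Fin.castLE (min_le_right m p) j)),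
    fun i _ e => M⁻¹ e i, ?_, ?_⟩
  · intro i j _
    refine ⟨col_norm_one _ (hU i) _, ?_, ?_⟩
    · simpa [norm_star] using col_norm_one _ (hV i) (Fin.castLE (min_le_right m p) j)
    · -- columns of M⁻¹ = Mᴴ have unit norm
      have hMM' : Mᴴᴴ * Mᴴ = 1 := by
        rw [Matrix.conjTranspose_conjTranspose]
        simpa [Matrix.star_eq_conjTranspose] using hM.2
      simpa [hMinv] using col_norm_one Mᴴ hMM' i
  · intro a b e
    have hdiag := hsvd.2.2.2.1
    show mode3 (fun i => truncSlice (ρ i) (mode3 U M i) (mode3 S M i) (mode3 V M i)) M⁻¹ e a b = _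
    rw [mode3_apply]
    refine Finset.sum_congr rfl fun c _ => ?_
    have hts : truncSlice (ρ c) (mode3 U M c) (mode3 S M c) (mode3 V M c) a b
        = ∑ j : Fin m, ∑ l : Fin p, if (j : ℕ) < ρ c ∧ (l : ℕ) < ρ c then
            mode3 U M c a j * mode3 S M c j l * star (mode3 V M c b l) else 0 := rfl
    rw [hts, diag_sum (hρ c)
      (fun j l => if (j : ℕ) < ρ c ∧ (l : ℕ) < ρ c then
        mode3 U M c a j * mode3 S M c j l * star (mode3 V M c b l) else 0)
      (by
        intro j l h
        by_cases hc : (j : ℕ) < ρ c ∧ (l : ℕ) < ρ c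
        · rcases h with h | h
          · simp [hc, hdiag c j l h]
          · exact (h hc.1).elim
        · simp [hc])]
    rw [Finset.mul_sum]
    refine Finset.sum_congr rfl fun q _ => ?_
    by_cases hq : (q : ℕ) < ρ c
    · simp only [Fin.coe_castLE, hq, and_self, if_true]
      ring
    · simp [Fin.coe_castLE, hq]
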